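/- Let D ⊂ ℝ^d be a measurable set, 1 ≤ p < ∞, and g ∈ L¹(D^k, C₀(ℝ^{Nk})). Then the functional L_g : L^p(D,ℝ^N) → ℝ defined by L_g(u) = ∫_{D^k} g(x₁,…,x_k)(u(x₁),…,u(x_k)) dx is uniformly continuous and satisfies sup_u |L_g(u)| ≤ ‖g‖_{L¹(D^k,C₀)}. -/

import Mathlib

open MeasureTheory

set_option linter.unusedSectionVars false
set_option synthInstance.maxHeartbeats 1000000
set_option maxHeartbeats 1000000

private lemma c0_norm_apply_le {X : Type*} [TopologicalSpace X]
    (φ : ZeroAtInftyContinuousMap X ℝ) (y : X) : ‖φ y‖ ≤ ‖φ‖ := by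
  rw [← ZeroAtInftyContinuousMap.norm_toBCF_eq_norm]
  exact φ.toBCF.norm_coe_le_norm y

private lemma c0_continuous_eval {X : Type*} [TopologicalSpace X] :
    Continuous fun q : ZeroAtInftyContinuousMap X ℝ × X => q.1 q.2 :=
  (continuous_eval (F := BoundedContinuousFunction X ℝ)).comp
    ((ZeroAtInftyContinuousMap.isometry_toBCF.continuous.comp continuous_fst).prodMk
      continuous_snd)

variable {d N k : ℕ} {D : Set (Fin d → ℝ)} {p : ENNReal} [Fact (1 ≤ p)]

private lemma aux_comp_aesm (u : Lp (Fin N → ℝ) p (volume.restrict D)) :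
    AEStronglyMeasurable (fun x : Fin k → Fin d → ℝ => fun i => u (x i))
      (Measure.pi fun _ : Fin k => volume.restrict D) := by
  have hu := Lp.aestronglyMeasurable u
  refine ⟨fun x i => hu.mk u (x i), ?_, ?_⟩
  · exact (measurable_pi_lambda _ fun i =>
      hu.stronglyMeasurable_mk.measurable.comp (measurable_pi_apply i)).stronglyMeasurable
  · have h := Filter.eventually_all.2 fun i : Fin k =>
      (Measure.tendsto_eval_ae_ae (i := i)).eventually hu.ae_eq_mk
    exact h.mono fun x hx => funext fun i => hx i


private lemma aux_aesm {g : (Fin k → Fin d → ℝ) → ZeroAtInftyContinuousMap (Fin k → Fin N → ℝ) ℝ}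
    (hg : AEStronglyMeasurable g (Measure.pi fun _ : Fin k => volume.restrict D))
    (u : Lp (Fin N → ℝ) p (volume.restrict D)) :
    AEStronglyMeasurable (fun x => g x (fun i => u (x i)))
      (Measure.pi fun _ : Fin k => volume.restrict D) :=
  c0_continuous_eval.comp_aestronglyMeasurable (hg.prodMk (aux_comp_aesm u))

private lemma aux_int {g : (Fin k → Fin d → ℝ) → ZeroAtInftyContinuousMap (Fin k → Fin N → ℝ) ℝ}
    (hg : Integrable g (Measure.pi fun _ : Fin k => volume.restrict D))
    (u : Lp (Fin N → ℝ) p (volume.restrict D)) :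
    Integrable (fun x => g x (fun i => u (x i)))
      (Measure.pi fun _ : Fin k => volume.restrict D) :=
  hg.norm.mono' (aux_aesm hg.1 u)
    (Filter.Eventually.of_forall fun x => by
      simpa using c0_norm_apply_le (g x) (fun i => u (x i)))

private lemma uc_indicator (hp : p ≠ ⊤)
    (φ : ZeroAtInftyContinuousMap (Fin k → Fin N → ℝ) ℝ)
    {s : Set (Fin k → Fin d → ℝ)} (hs : MeasurableSet s)
    (hνs : (Measure.pi fun _ : Fin k => volume.restrict D) s < ⊤) :
    UniformContinuous (fun u : Lp (Fin N → ℝ) p (volume.restrict D) =>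
      ∫ x in s, φ (fun i => u (x i)) ∂(Measure.pi fun _ : Fin k => volume.restrict D)) := by
  set μ : Measure (Fin d → ℝ) := volume.restrict D with hμdef
  set ν : Measure (Fin k → Fin d → ℝ) := Measure.pi fun _ : Fin k => μ with hνdef
  have hp0 : p ≠ 0 := (lt_of_lt_of_le zero_lt_one (Fact.out : 1 ≤ p)).ne'
  have hpt : 0 < p.toReal := ENNReal.toReal_pos hp0 hp
  rw [Metric.uniformContinuous_iff]
  intro ε hε
  set M : ℝ := ‖φ‖ with hMdef
  have hM : 0 ≤ M := norm_nonneg φ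
  set m : ℝ := (ν s).toReal with hmdef
  have hm : 0 ≤ m := ENNReal.toReal_nonneg
  set ε₁ : ℝ := ε / (2 * (m + 1)) with hε₁def
  have hε₁ : 0 < ε₁ := by positivity
  obtain ⟨δ₁, hδ₁, hφδ⟩ :=
    Metric.uniformContinuous_iff.mp (ZeroAtInftyContinuousMap.uniformContinuous φ) ε₁ hε₁
  haveI : IsFiniteMeasure (ν.restrict s) := ⟨by rwa [Measure.restrict_apply_univ]⟩
  set κ : Fin k → Measure (Fin d → ℝ) :=
    fun i => Measure.map (fun x : Fin k → Fin d → ℝ => x i) (ν.restrict s) with hκdef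
  haveI : ∀ i, IsFiniteMeasure (κ i) := fun i => Measure.isFiniteMeasure_map _ _
  have hκac : ∀ i, κ i ≪ μ := by
    intro i
    refine Measure.AbsolutelyContinuous.mk fun T hT h0 => ?_
    rw [hκdef, Measure.map_apply (measurable_pi_apply i) hT]
    have hz : ν ((fun x : Fin k → Fin d → ℝ => x i) ⁻¹' T) = 0 :=
      Measure.pi_eval_preimage_null _ h0
    exact le_antisymm (le_trans (Measure.le_iff'.1 Measure.restrict_le_self _) hz.le) zero_le
  set f : (Fin d → ℝ) → ENNReal := fun y => ∑ i, (κ i).rnDeriv μ y with hfdef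
  have hfmeas : Measurable f := Finset.measurable_sum _ fun i _ => Measure.measurable_rnDeriv _ _
  have hfint : ∫⁻ y, f y ∂μ ≠ ⊤ := by
    rw [hfdef]
    rw [lintegral_finset_sum _ fun i _ => Measure.measurable_rnDeriv _ _]
    exact (ENNReal.sum_lt_top.2 fun i _ => Measure.lintegral_rnDeriv_lt_top (κ i) μ).ne
  set η : ENNReal := ENNReal.ofReal (ε / (2 * (2 * M + 1))) with hηdef
  have hη : η ≠ 0 := (ENNReal.ofReal_pos.2 (by positivity)).ne'
  obtain ⟨δ₂, hδ₂, hδ₂T⟩ := exists_pos_setLIntegral_lt_of_measure_lt hfint hη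
  set δ₃ : ENNReal := min δ₂ 1 with hδ₃def
  have hδ₃0 : δ₃ ≠ 0 := (lt_min hδ₂ zero_lt_one).ne'
  have hδ₃top : δ₃ ≠ ⊤ := ((min_le_right _ _).trans_lt ENNReal.one_lt_top).ne
  set c : ENNReal := (ENNReal.ofReal δ₁)⁻¹ ^ p.toReal with hcdef
  have hc : c ≠ ⊤ := ENNReal.rpow_ne_top_of_nonneg hpt.le
    (by simp [ENNReal.ofReal_eq_zero, not_le, hδ₁])
  set b : ENNReal := min ((δ₃ / 2) / (c + 1)) 1 with hbdef
  have hb0 : b ≠ 0 := by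
    have h1 : (0:ENNReal) < δ₃ / 2 := ENNReal.div_pos hδ₃0 (by finiteness)
    have h2 : (0:ENNReal) < (δ₃ / 2) / (c + 1) := ENNReal.div_pos h1.ne' (by finiteness)
    exact (lt_min h2 zero_lt_one).ne'
  have hbtop : b ≠ ⊤ := ((min_le_right _ _).trans_lt ENNReal.one_lt_top).ne
  set r : ENNReal := b ^ (1 / p.toReal) with hrdef
  have hr0 : r ≠ 0 := (ENNReal.rpow_pos (pos_iff_ne_zero.2 hb0) hbtop).ne'
  have hrtop : r ≠ ⊤ := ENNReal.rpow_ne_top_of_nonneg (by positivity) hbtop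
  refine ⟨r.toReal, ENNReal.toReal_pos hr0 hrtop, ?_⟩
  intro u v hdist
  -- measurable representative of the difference
  have huv : AEStronglyMeasurable (fun y => u y - v y) μ :=
    (Lp.aestronglyMeasurable u).sub (Lp.aestronglyMeasurable v)
  set w := huv.mk _ with hwdef
  have hwmeas : StronglyMeasurable w := huv.stronglyMeasurable_mk
  have hw_ae : (fun y => u y - v y) =ᵐ[μ] w := huv.ae_eq_mk
  set T : Set (Fin d → ℝ) := {y | ENNReal.ofReal δ₁ ≤ (‖w y‖₊ : ENNReal)} with hTdef
  have hT : MeasurableSet T := measurableSet_le measurable_const hwmeas.measurable.nnnorm.coe_nnreal_ennreal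
  -- Chebyshev
  have hcheb : μ T ≤ c * eLpNorm w p μ ^ p.toReal :=
    meas_ge_le_mul_pow_eLpNorm_enorm (μ := μ) hp0 hp hwmeas.aestronglyMeasurable
      (by simp [ENNReal.ofReal_eq_zero, not_le, hδ₁]) (by simp)
  have heq1 : eLpNorm w p μ = eLpNorm (⇑(u - v)) p μ := by
    refine (eLpNorm_congr_ae hw_ae).symm.trans (eLpNorm_congr_ae ?_)
    filter_upwards [Lp.coeFn_sub u v] with y hy
    rw [hy]; rfl
  have hlt : eLpNorm (⇑(u - v)) p μ < r := by
    have h1 : dist u v = (eLpNorm (⇑(u - v)) p μ).toReal := by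
      rw [dist_eq_norm, Lp.norm_def]
    rw [h1] at hdist
    have := (ENNReal.toReal_lt_toReal (Lp.eLpNorm_ne_top (u - v)) hrtop).1 hdist
    exact this
  have hμT : μ T < δ₃ := by
    have h2 : c * eLpNorm w p μ ^ p.toReal ≤ c * b := by
      have : eLpNorm w p μ ^ p.toReal ≤ r ^ p.toReal := by
        rw [heq1]
        exact ENNReal.rpow_le_rpow hlt.le hpt.le
      have hrb : r ^ p.toReal = b := by
        rw [hrdef, ← ENNReal.rpow_mul, one_div_mul_cancel hpt.ne', ENNReal.rpow_one]
      exact mul_le_mul_right (this.trans_eq hrb) c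
    have h3 : c * b ≤ δ₃ / 2 := by
      calc c * b ≤ (c + 1) * ((δ₃ / 2) / (c + 1)) := by
            exact mul_le_mul' le_self_add (min_le_left _ _)
        _ = δ₃ / 2 := ENNReal.mul_div_cancel (by simp) (by finiteness)
    exact ((hcheb.trans h2).trans h3).trans_lt (ENNReal.half_lt_self hδ₃0 hδ₃top)
  -- the bad set
  set E : Set (Fin k → Fin d → ℝ) := ⋃ i, (fun x : Fin k → Fin d → ℝ => x i) ⁻¹' T with hEdef
  have hE : MeasurableSet E := MeasurableSet.iUnion fun i => (measurable_pi_apply i) hT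
  have hνE : ν.restrict s E < η := by
    have hstep : ν.restrict s E ≤ ∑ i, κ i T := by
      refine (measure_iUnion_le _).trans ?_
      rw [tsum_fintype]
      refine Finset.sum_le_sum fun i _ => ?_
      rw [hκdef, Measure.map_apply (measurable_pi_apply i) hT]
    have hκT : ∀ i, κ i T = ∫⁻ y in T, (κ i).rnDeriv μ y ∂μ := by
      intro i
      conv_lhs => rw [← Measure.withDensity_rnDeriv_eq (κ i) μ (hκac i)]
      rw [withDensity_apply _ hT]
    have hsum : ∑ i, κ i T = ∫⁻ y in T, f y ∂μ := by
      simp_rw [hκT, hfdef]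
      rw [lintegral_finset_sum _ fun i _ => Measure.measurable_rnDeriv _ _]
    refine hstep.trans_lt ?_
    rw [hsum]
    exact hδ₂T T (hμT.trans_le (min_le_left _ _))
  -- integrability of the two integrands
  have asm : ∀ u' : Lp (Fin N → ℝ) p μ, AEStronglyMeasurable
      (fun x : Fin k → Fin d → ℝ => φ (fun i => u' (x i))) (ν.restrict s) :=
    fun u' => ((map_continuous φ).comp_aestronglyMeasurable (aux_comp_aesm u')).restrict
  have hint : ∀ u' : Lp (Fin N → ℝ) p μ, Integrable
      (fun x : Fin k → Fin d → ℝ => φ (fun i => u' (x i))) (ν.restrict s) :=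
    fun u' => (integrable_const M).mono' (asm u')
      (Filter.Eventually.of_forall fun x => c0_norm_apply_le φ _)
  rw [dist_eq_norm, ← integral_sub (hint u) (hint v)]
  refine lt_of_le_of_lt (norm_integral_le_integral_norm _) ?_
  -- a.e. pointwise bound
  set B : (Fin k → Fin d → ℝ) → ℝ := fun x => E.indicator (fun _ => 2 * M) x + ε₁ with hBdef
  have hBint : Integrable B (ν.restrict s) :=
    ((integrable_const (2 * M)).indicator hE).add (integrable_const ε₁)
  have hae : ∀ᵐ x ∂ν.restrict s, ∀ i, u (x i) - v (x i) = w (x i) := by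
    refine ae_restrict_of_ae ?_
    exact Filter.eventually_all.2 fun i =>
      (Measure.tendsto_eval_ae_ae (μ := fun _ : Fin k => μ) (i := i)).eventually hw_ae
  have hbound : ∀ᵐ x ∂ν.restrict s,
      ‖φ (fun i => u (x i)) - φ (fun i => v (x i))‖ ≤ B x := by
    filter_upwards [hae] with x hx
    by_cases hxE : x ∈ E
    · rw [hBdef]
      simp only [Set.indicator_of_mem hxE]
      calc ‖φ (fun i => u (x i)) - φ (fun i => v (x i))‖
          ≤ ‖φ (fun i => u (x i))‖ + ‖φ (fun i => v (x i))‖ := norm_sub_le _ _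
        _ ≤ M + M := add_le_add (c0_norm_apply_le φ _) (c0_norm_apply_le φ _)
        _ ≤ 2 * M + ε₁ := by linarith
    · have hclose : ∀ i, dist (u (x i)) (v (x i)) < δ₁ := by
        intro i
        have hxi : x i ∉ T := fun h => hxE (Set.mem_iUnion.2 ⟨i, h⟩)
        have : (‖w (x i)‖₊ : ENNReal) < ENNReal.ofReal δ₁ := not_le.1 hxi
        rw [← ENNReal.ofReal_coe_nnreal, coe_nnnorm, ENNReal.ofReal_lt_ofReal_iff hδ₁] at this
        rw [dist_eq_norm, hx i]
        exact this
      have hdp : dist (fun i => u (x i)) (fun i => v (x i)) < δ₁ :=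
        (dist_pi_lt_iff hδ₁).2 hclose
      have := hφδ hdp
      rw [Real.dist_eq] at this
      rw [hBdef]
      simp only [Set.indicator_of_notMem hxE, zero_add]
      exact this.le
  refine lt_of_le_of_lt (integral_mono_ae ((hint u).sub (hint v)).norm hBint hbound) ?_
  -- compute ∫ B
  have hintB : ∫ x, B x ∂ν.restrict s
      = (ν.restrict s E).toReal * (2 * M) + ε₁ * m := by
    rw [hBdef]
    rw [integral_add ((integrable_const (2 * M)).indicator hE) (integrable_const ε₁)]
    rw [integral_indicator_const _ hE, integral_const]
    rw [measureReal_def, measureReal_def, Measure.restrict_apply_univ]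
    simp [hmdef, mul_comm, smul_eq_mul]
  rw [hintB]
  -- numeric estimate
  have hEsmall : (ν.restrict s E).toReal ≤ ε / (2 * (2 * M + 1)) := by
    have := ENNReal.toReal_mono (by simp [hηdef]) hνE.le
    rwa [hηdef, ENNReal.toReal_ofReal (by positivity)] at this
  have h1 : (ν.restrict s E).toReal * (2 * M) ≤ ε / 2 := by
    calc (ν.restrict s E).toReal * (2 * M) ≤ (ε / (2 * (2 * M + 1))) * (2 * M) := by
          apply mul_le_mul_of_nonneg_right hEsmall (by positivity)
      _ ≤ ε / 2 := by
          rw [div_mul_eq_mul_div, div_le_div_iff₀ (by positivity) (by norm_num)]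
          nlinarith
  have h2 : ε₁ * m < ε / 2 := by
    rw [hε₁def, div_mul_eq_mul_div, div_lt_div_iff₀ (by positivity) (by norm_num)]
    nlinarith
  linarith

private lemma diff_bound
    {g₁ g₂ : (Fin k → Fin d → ℝ) → ZeroAtInftyContinuousMap (Fin k → Fin N → ℝ) ℝ}
    (hg₁ : Integrable g₁ (Measure.pi fun _ : Fin k => volume.restrict D))
    (hg₂ : Integrable g₂ (Measure.pi fun _ : Fin k => volume.restrict D))
    (u : Lp (Fin N → ℝ) p (volume.restrict D)) :
    |(∫ x, g₁ x (fun i => u (x i)) ∂(Measure.pi fun _ : Fin k => volume.restrict D)) -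
      ∫ x, g₂ x (fun i => u (x i)) ∂(Measure.pi fun _ : Fin k => volume.restrict D)|
      ≤ ∫ x, ‖g₁ x - g₂ x‖ ∂(Measure.pi fun _ : Fin k => volume.restrict D) := by
  rw [← integral_sub (aux_int hg₁ u) (aux_int hg₂ u)]
  refine (norm_integral_le_integral_norm _).trans
    (integral_mono ((aux_int hg₁ u).sub (aux_int hg₂ u)).norm (hg₁.sub hg₂).norm fun x => ?_)
  simpa using c0_norm_apply_le (g₁ x - g₂ x) (fun i => u (x i))

theorem stmt7 (d N k : ℕ) (D : Set (Fin d → ℝ)) (hD : MeasurableSet D)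
    (p : ENNReal) (hp1 : 1 ≤ p) [Fact (1 ≤ p)] (hp : p ≠ ⊤)
    (g : (Fin k → (Fin d → ℝ)) → ZeroAtInftyContinuousMap (Fin k → (Fin N → ℝ)) ℝ)
    (hg : Integrable g (Measure.pi fun _ : Fin k => volume.restrict D)) :
    UniformContinuous (fun u : Lp (Fin N → ℝ) p (volume.restrict D) =>
      ∫ x, g x (fun i => u (x i)) ∂(Measure.pi fun _ : Fin k => volume.restrict D)) ∧
    ∀ u : Lp (Fin N → ℝ) p (volume.restrict D),
      |∫ x, g x (fun i => u (x i)) ∂(Measure.pi fun _ : Fin k => volume.restrict D)|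
        ≤ ∫ x, ‖g x‖ ∂(Measure.pi fun _ : Fin k => volume.restrict D) := by
  set ν : Measure (Fin k → Fin d → ℝ) := Measure.pi fun _ : Fin k => volume.restrict D with hν
  constructor
  · -- uniform continuity, by induction on g
    refine Integrable.induction (μ := ν)
      (P := fun h : (Fin k → Fin d → ℝ) → ZeroAtInftyContinuousMap (Fin k → Fin N → ℝ) ℝ =>
        UniformContinuous (fun u : Lp (Fin N → ℝ) p (volume.restrict D) =>
          ∫ x, h x (fun i => u (x i)) ∂ν)) ?_ ?_ ?_ ?_ hg
    · -- indicator case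
      intro φ s hs hνs
      have heq : (fun u : Lp (Fin N → ℝ) p (volume.restrict D) =>
          ∫ x, (s.indicator (fun _ => φ) x) (fun i => u (x i)) ∂ν)
          = fun u => ∫ x in s, φ (fun i => u (x i)) ∂ν := by
        funext u
        rw [← integral_indicator hs]
        congr 1
        funext x
        by_cases hx : x ∈ s <;>
          simp [Set.indicator_of_mem, Set.indicator_of_notMem, hx]
      rw [heq]
      exact uc_indicator hp φ hs hνs
    · -- additivity
      intro f₁ f₂ _ hf₁ hf₂ h₁ h₂
      have heq : (fun u : Lp (Fin N → ℝ) p (volume.restrict D) =>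
          ∫ x, (f₁ + f₂) x (fun i => u (x i)) ∂ν)
          = fun u => (∫ x, f₁ x (fun i => u (x i)) ∂ν) + ∫ x, f₂ x (fun i => u (x i)) ∂ν := by
        funext u
        rw [← integral_add (aux_int hf₁ u) (aux_int hf₂ u)]
        congr 1
      rw [heq]
      exact h₁.add h₂
    · -- closedness in L¹
      refine IsSeqClosed.isClosed ?_
      intro F f hF hlim
      simp only [Set.mem_setOf_eq] at hF ⊢
      rw [Metric.uniformContinuous_iff]
      intro ε hε
      obtain ⟨n, hn'⟩ := Metric.tendsto_atTop.mp hlim (ε / 3) (by positivity)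
      have hn : dist (F n) f < ε / 3 := hn' n le_rfl
      obtain ⟨δ, hδ, hδuc⟩ := Metric.uniformContinuous_iff.mp (hF n) (ε / 3) (by positivity)
      refine ⟨δ, hδ, fun {u v} huv => ?_⟩
      have hIb : ∀ u' : Lp (Fin N → ℝ) p (volume.restrict D),
          |(∫ x, (F n : (Fin k → Fin d → ℝ) → _) x (fun i => u' (x i)) ∂ν) -
            ∫ x, (f : (Fin k → Fin d → ℝ) → _) x (fun i => u' (x i)) ∂ν| ≤ dist (F n) f := by
        intro u'
        refine (diff_bound (L1.integrable_coeFn (F n)) (L1.integrable_coeFn f) u').trans ?_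
        rw [dist_eq_norm, L1.norm_eq_integral_norm]
        refine le_of_eq (integral_congr_ae ?_)
        filter_upwards [Lp.coeFn_sub (F n) f] with x hx
        rw [hx]; rfl
      have h1 := hIb u
      have h2 := hIb v
      have h3 := hδuc huv
      rw [Real.dist_eq] at h3 ⊢
      have h4 : dist (F n) f < ε / 3 := hn
      set A := ∫ x, (f : (Fin k → Fin d → ℝ) → _) x (fun i => u (x i)) ∂ν
      set B := ∫ x, (F n : (Fin k → Fin d → ℝ) → _) x (fun i => u (x i)) ∂ν
      set B' := ∫ x, (F n : (Fin k → Fin d → ℝ) → _) x (fun i => v (x i)) ∂ν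
      set C := ∫ x, (f : (Fin k → Fin d → ℝ) → _) x (fun i => v (x i)) ∂ν
      have t1 : |A - C| ≤ |A - B| + |B - C| := abs_sub_le _ _ _
      have t2 : |B - C| ≤ |B - B'| + |B' - C| := abs_sub_le _ _ _
      rw [abs_sub_comm] at h1
      linarith
    · -- ae congruence
      intro f₁ f₂ hae _ h₁
      have heq : (fun u : Lp (Fin N → ℝ) p (volume.restrict D) =>
          ∫ x, f₂ x (fun i => u (x i)) ∂ν)
          = fun u => ∫ x, f₁ x (fun i => u (x i)) ∂ν := by
        funext u
        exact integral_congr_ae (hae.mono fun x hx => by simp only [hx])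
      rw [heq]
      exact h₁
  · -- the norm bound
    intro u
    refine (norm_integral_le_integral_norm _).trans
      (integral_mono (aux_int hg u).norm hg.norm fun x => ?_)
    simpa using c0_norm_apply_le (g x) (fun i => u (x i))
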